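/- Let ψ_g be the strictly positive normalized ground state of H_Λ = (-Δ + V)_Λ on a box Λ = Λ_L(x₀) ⊂ Z^d. Then ψ_g(x) ≥ Y^{-dL} for all x ∈ Λ, where Y = 2d + 1 + spr(V). -/

import Mathlib

open scoped BigOperators

noncomputable section

/-- `ℤ^d`. -/
abbrev Zd (d : ℕ) := Fin d → ℤ

/-- `ℓ¹` distance on `ℤ^d`. -/
def dist1 {d : ℕ} (x y : Zd d) : ℕ := ∑ i, (x i - y i).natAbs

/-- the `i`-th coordinate unit vector. -/
def unitVec {d : ℕ} (i : Fin d) : Zd d := fun j => if j = i then 1 else 0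

/-- the negative discrete Laplacian: `(-Δφ)(x) = Σ_{‖x-y‖₁=1} (φ(x) - φ(y))`. -/
def negLap {d : ℕ} (φ : Zd d → ℝ) (x : Zd d) : ℝ :=
  ∑ i, ((φ x - φ (x + unitVec i)) + (φ x - φ (x - unitVec i)))

/-- characteristic function of a set. -/
def chi {d : ℕ} (A : Set (Zd d)) : Zd d → ℝ := A.indicator fun _ => 1

/-- edge boundary `∂A = {(x,y) ∈ A × Aᶜ : ‖x-y‖₁ = 1}`. -/
def bdry {d : ℕ} (A : Set (Zd d)) : Set (Zd d × Zd d) :=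
  {p | p.1 ∈ A ∧ p.2 ∉ A ∧ dist1 p.1 p.2 = 1}

/-- squared `ℓ²` norm (for finitely supported functions). -/
def norm2 {d : ℕ} (φ : Zd d → ℝ) : ℝ := ∑ᶠ x, φ x ^ 2

/-- quadratic form `⟨φ, (-Δ + V)φ⟩` (for finitely supported `φ`). -/
def energy {d : ℕ} (V : Zd d → ℝ) (φ : Zd d → ℝ) : ℝ :=
  ∑ᶠ x, φ x * (negLap φ x + V x * φ x)

/-- `V` is a bounded potential. -/
def BddPot {d : ℕ} (V : Zd d → ℝ) : Prop := ∃ C, ∀ x, |V x| ≤ C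

/-- the spread `spr(V) = sup V - inf V` of a bounded potential. -/
def spr {d : ℕ} (V : Zd d → ℝ) : ℝ := sSup (Set.range V) - sInf (Set.range V)

/-- `E_∅(H) = inf σ(-Δ + V)`, characterized variationally over normalized finitely
supported functions. -/
def E0 {d : ℕ} (V : Zd d → ℝ) : ℝ :=
  sInf {r | ∃ φ : Zd d → ℝ, (Function.support φ).Finite ∧ norm2 φ = 1 ∧ r = energy V φ}

/-- `E_Γ(H) = inf σ(H_Γ)`, the ground state energy of the `Γ`-trimmed operator,
characterized variationally over normalized finitely supported functions vanishing on `Γ`. -/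
def EG {d : ℕ} (V : Zd d → ℝ) (Γ : Set (Zd d)) : ℝ :=
  sInf {r | ∃ φ : Zd d → ℝ, (Function.support φ).Finite ∧ (∀ x ∈ Γ, φ x = 0) ∧
    norm2 φ = 1 ∧ r = energy V φ}

/-- `E_Γ(H,t) = inf σ(H + t χ_Γ)`. -/
def EGt {d : ℕ} (V : Zd d → ℝ) (Γ : Set (Zd d)) (t : ℝ) : ℝ :=
  E0 fun x => V x + t * chi Γ x

/-- the open box `Λ⁰_K(ζ) = {y : ‖y-ζ‖_∞ < K/2}`. -/
def Lam0 {d : ℕ} (K : ℕ) (ζ : Zd d) : Set (Zd d) := {y | ∀ i, 2 * (y i - ζ i).natAbs < K}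

/-- `Γ` is `(K,Q)`-relatively dense: `|Γ ∩ Λ⁰_K(ζ)| ≥ Q` for all `ζ ∈ KZ^d`. -/
def RelDense {d : ℕ} (Γ : Set (Zd d)) (K Q : ℕ) : Prop :=
  ∀ z : Zd d, Q ≤ (Γ ∩ Lam0 K fun i => (K : ℤ) * z i).ncard

/-- `K_* = K` if `K` is odd, `K+1` if `K` is even. -/
def Kstar (K : ℕ) : ℕ := if K % 2 = 1 then K else K + 1

/-- `⟨χ_A, (-Δ)χ_A⟩` for a finite set `A`; for `A ⊆ Γᶜ` this coincides with
`⟨χ_A, (-Δ_Γ)χ_A⟩` for the `Γ`-trimmed Laplacian. -/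
def qform {d : ℕ} (A : Finset (Zd d)) : ℝ := ∑ x ∈ A, negLap (chi ↑A) x

/-- Cheeger constant `β(Γ)` of the `Γ`-trimmed Laplacian. -/
def betaG {d : ℕ} (Γ : Set (Zd d)) : ℝ :=
  sInf {r | ∃ A : Finset (Zd d), A.Nonempty ∧ (↑A : Set (Zd d)) ⊆ Γᶜ ∧
    r = qform A / A.card}

/-- `⟨χ_A, H(t)χ_A⟩ = ⟨χ_A, (-Δ)χ_A⟩ + t|A ∩ Γ|` for a finite set `A`. -/
def qformT {d : ℕ} (Γ : Set (Zd d)) (t : ℝ) (A : Finset (Zd d)) : ℝ :=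
  qform A + t * ((↑A ∩ Γ : Set (Zd d)).ncard)

/-- Cheeger constant `β(t)` of `H(t) = -Δ + t χ_Γ`. -/
def betaT {d : ℕ} (Γ : Set (Zd d)) (t : ℝ) : ℝ :=
  sInf {r | ∃ A : Finset (Zd d), A.Nonempty ∧ r = qformT Γ t A / A.card}

/-- the box `Λ_L(x₀) = {y : ‖y-x₀‖_∞ ≤ L/2}`. -/
def box {d : ℕ} (L : ℕ) (x₀ : Zd d) : Set (Zd d) := {y | ∀ i, 2 * (y i - x₀ i).natAbs ≤ L}

/-- `φ` is an eigenfunction of `H_Λ = (-Δ + V)_Λ` with eigenvalue `E`. -/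
def eigOn {d : ℕ} (V : Zd d → ℝ) (Λ : Set (Zd d)) (φ : Zd d → ℝ) (E : ℝ) : Prop :=
  (∀ x ∉ Λ, φ x = 0) ∧ ∀ x ∈ Λ, negLap φ x + V x * φ x = E * φ x

/-- `E^Λ = inf σ(H_Λ)`, variationally. -/
def Ebox {d : ℕ} (V : Zd d → ℝ) (Λ : Set (Zd d)) : ℝ :=
  sInf {r | ∃ φ : Zd d → ℝ, (∀ x ∉ Λ, φ x = 0) ∧ norm2 φ = 1 ∧ r = energy V φ}

/-- the positive normalized ground state of `H_Λ` on `Λ = Λ_L(x₀)`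
satisfies the uniform lower bound `ψ_g(x) ≥ Y^{-dL}`, `Y = 2d + 1 + spr(V)`. -/


lemma box_finite {d : ℕ} (L : ℕ) (x₀ : Zd d) : (box L x₀).Finite := by
  apply Set.Finite.subset (Set.Finite.pi (fun i : Fin d => Set.finite_Icc (x₀ i - L) (x₀ i + L)))
  intro y hy
  simp only [Set.mem_pi, Set.mem_univ, Set.mem_Icc, forall_true_left]
  intro i
  have := hy i
  omega

lemma dist1_eq_zero_iff {d : ℕ} {x y : Zd d} : dist1 x y = 0 ↔ x = y := by
  unfold dist1
  rw [Finset.sum_eq_zero_iff]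
  constructor
  · intro h; funext i; have := h i (Finset.mem_univ i); omega
  · intro h; subst h; intro i _; omega

def stepToward {d : ℕ} (x z : Zd d) (i : Fin d) : Zd d :=
  if x i < z i then z - unitVec i else z + unitVec i

lemma stepToward_apply {d : ℕ} (x z : Zd d) (i j : Fin d) :
    stepToward x z i j = if x i < z i then z j - (if j = i then 1 else 0)
      else z j + (if j = i then 1 else 0) := by
  unfold stepToward; split <;> rfl

lemma dist1_split {d : ℕ} (x w : Zd d) (i : Fin d) :
    dist1 x w = (x i - w i).natAbs + ∑ j ∈ Finset.univ.erase i, (x j - w j).natAbs := by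
  rw [dist1, ← Finset.add_sum_erase _ _ (Finset.mem_univ i)]

lemma stepToward_dist {d : ℕ} (x z : Zd d) (i : Fin d) (h : x i ≠ z i) :
    dist1 x (stepToward x z i) + 1 = dist1 x z := by
  rw [dist1_split x z i, dist1_split x (stepToward x z i) i]
  have h1 : ∀ j ∈ Finset.univ.erase i, (x j - stepToward x z i j).natAbs = (x j - z j).natAbs := by
    intro j hj
    have hji : j ≠ i := (Finset.mem_erase.mp hj).1
    rw [stepToward_apply]
    simp [hji]
  rw [Finset.sum_congr rfl h1]
  have h2 : (x i - stepToward x z i i).natAbs + 1 = (x i - z i).natAbs := by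
    by_cases hlt : x i < z i
    · rw [stepToward_apply, if_pos hlt, if_pos rfl]
      omega
    · rw [stepToward_apply, if_neg hlt, if_pos rfl]
      omega
  omega

lemma stepToward_recover_pos {d : ℕ} (x z : Zd d) (i : Fin d) (h : x i < z i) :
    stepToward x z i + unitVec i = z := by
  unfold stepToward; rw [if_pos h]; abel

lemma stepToward_recover_neg {d : ℕ} (x z : Zd d) (i : Fin d) (h : ¬ x i < z i) :
    stepToward x z i - unitVec i = z := by
  unfold stepToward; rw [if_neg h]; abel

lemma stepToward_mem_box {d L : ℕ} {x₀ x z : Zd d} (hx : x ∈ box L x₀) (hz : z ∈ box L x₀)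
    (i : Fin d) (h : x i ≠ z i) : stepToward x z i ∈ box L x₀ := by
  simp only [box, Set.mem_setOf_eq] at hx hz ⊢
  intro j
  have hxj := hx j
  have hzj := hz j
  rw [stepToward_apply]
  by_cases hji : j = i
  · subst hji
    have hxi := hx j
    split <;> simp <;> omega
  · simp only [hji, if_neg, ite_false]
    split <;> omega

theorem stmt12 (d L : ℕ) (hd : 0 < d) (hL : 0 < L) (x₀ : Zd d)
    (V : Zd d → ℝ) (hV : BddPot V) (ψ : Zd d → ℝ)
    (hnorm : norm2 ψ = 1) (hpos : ∀ x ∈ box L x₀, 0 < ψ x)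
    (heig : eigOn V (box L x₀) ψ (Ebox V (box L x₀))) :
    ∀ x ∈ box L x₀, (2 * (d : ℝ) + 1 + spr V) ^ (-((d * L : ℕ) : ℤ)) ≤ ψ x := by
  classical
  set Λ := box L x₀ with hΛdef
  have hΛfin : Λ.Finite := box_finite L x₀
  set F : Finset (Zd d) := hΛfin.toFinset with hFdef
  have hmemF : ∀ y, y ∈ F ↔ y ∈ Λ := fun y => Set.Finite.mem_toFinset hΛfin
  have hx₀ : x₀ ∈ Λ := by
    show ∀ i, 2 * (x₀ i - x₀ i).natAbs ≤ L
    intro i; simp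
  have hψ0 : ∀ y, 0 ≤ ψ y := by
    intro y
    by_cases hy : y ∈ Λ
    · exact (hpos y hy).le
    · rw [heig.1 y hy]
  -- bounds on V
  obtain ⟨C, hC⟩ := hV
  have hne : (Set.range V).Nonempty := ⟨V (fun _ => 0), ⟨_, rfl⟩⟩
  have hbdd : BddAbove (Set.range V) := ⟨C, by rintro _ ⟨x, rfl⟩; exact (abs_le.mp (hC x)).2⟩
  have hbddb : BddBelow (Set.range V) := ⟨-C, by rintro _ ⟨x, rfl⟩; exact (abs_le.mp (hC x)).1⟩
  have hVle : ∀ x, V x ≤ sSup (Set.range V) := fun x => le_csSup hbdd ⟨x, rfl⟩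
  have hVge : ∀ x, sInf (Set.range V) ≤ V x := fun x => csInf_le hbddb ⟨x, rfl⟩
  set E := Ebox V Λ with hEdef
  -- E ≥ inf V via maximum principle
  have hFne : F.Nonempty := ⟨x₀, (hmemF x₀).mpr hx₀⟩
  obtain ⟨b, hbF, hbmax⟩ := Finset.exists_max_image F ψ hFne
  have hbΛ : b ∈ Λ := (hmemF b).mp hbF
  have hψmax : ∀ y, ψ y ≤ ψ b := by
    intro y
    by_cases hy : y ∈ Λ
    · exact hbmax y ((hmemF y).mpr hy)
    · rw [heig.1 y hy]; exact (hpos b hbΛ).le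
  have hlap : 0 ≤ negLap ψ b := by
    apply Finset.sum_nonneg
    intro i _
    have h1 := hψmax (b + unitVec i)
    have h2 := hψmax (b - unitVec i)
    linarith
  have hEge : sInf (Set.range V) ≤ E := by
    have heq := heig.2 b hbΛ
    have h1 : sInf (Set.range V) * ψ b ≤ E * ψ b := by
      calc sInf (Set.range V) * ψ b ≤ V b * ψ b :=
            mul_le_mul_of_nonneg_right (hVge b) (hψ0 b)
        _ ≤ negLap ψ b + V b * ψ b := by linarith
        _ = E * ψ b := heq
    exact le_of_mul_le_mul_right h1 (hpos b hbΛ)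
  -- the constant Y
  set Y : ℝ := 2 * (d : ℝ) + 1 + spr V with hYdef
  have hspr0 : 0 ≤ spr V := sub_nonneg.mpr (csInf_le_csSup hne hbddb hbdd)
  have hd1 : (1 : ℝ) ≤ (d : ℝ) := by exact_mod_cast hd
  have hY0 : (0 : ℝ) < Y := by rw [hYdef]; linarith
  -- key pointwise inequality
  have key : ∀ x ∈ Λ, ψ x + (∑ i, (ψ (x + unitVec i) + ψ (x - unitVec i))) ≤ Y * ψ x := by
    intro x hx
    have hlapeq : negLap ψ x
        = 2 * (d : ℝ) * ψ x - ∑ i, (ψ (x + unitVec i) + ψ (x - unitVec i)) := by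
      have hterm : ∀ i : Fin d, (ψ x - ψ (x + unitVec i)) + (ψ x - ψ (x - unitVec i))
          = 2 * ψ x - (ψ (x + unitVec i) + ψ (x - unitVec i)) := fun i => by ring
      rw [negLap, Finset.sum_congr rfl (fun i _ => hterm i), Finset.sum_sub_distrib,
        Finset.sum_const, Finset.card_univ, Fintype.card_fin, nsmul_eq_mul]
      ring
    have h2 := heig.2 x hx
    rw [hlapeq] at h2
    have hS : ∑ i, (ψ (x + unitVec i) + ψ (x - unitVec i))
        = (2 * (d : ℝ) + V x - E) * ψ x := by linear_combination -h2
    rw [hS]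
    have h3 : 2 * (d : ℝ) + V x - E ≤ 2 * (d : ℝ) + spr V := by
      have := hVle x
      simp only [spr]
      linarith
    calc ψ x + (2 * (d : ℝ) + V x - E) * ψ x
        ≤ ψ x + (2 * (d : ℝ) + spr V) * ψ x :=
          add_le_add_right (mul_le_mul_of_nonneg_right h3 (hψ0 x)) _
      _ = Y * ψ x := by rw [hYdef]; ring
  -- normalization
  have hsupp : ∀ y, ψ y ≠ 0 → y ∈ Λ := by
    intro y hy
    by_contra h
    exact hy (heig.1 y h)
  have hnorm' : ∑ y ∈ F, ψ y ^ 2 = 1 := by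
    rw [← hnorm, norm2]
    refine (finsum_eq_finset_sum_of_support_subset _ ?_).symm
    intro y hy
    have hy' : ψ y ≠ 0 := by
      intro h0
      simp only [Function.mem_support, h0] at hy
      exact hy (by ring)
    rw [hFdef, hΛfin.coe_toFinset]
    exact hsupp y hy'
  have hψle1 : ∀ y ∈ F, ψ y ≤ 1 := by
    intro y hyF
    have h1 : ψ y ^ 2 ≤ 1 := by
      rw [← hnorm']
      exact Finset.single_le_sum (fun z _ => sq_nonneg (ψ z)) hyF
    nlinarith [hψ0 y]
  have hsum1 : 1 ≤ ∑ y ∈ F, ψ y := by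
    rw [← hnorm']
    apply Finset.sum_le_sum
    intro y hyF
    nlinarith [hψ0 y, hψle1 y hyF]
  -- main induction
  have main : ∀ k : ℕ, ∀ x ∈ Λ, ∑ y ∈ F.filter (fun y => dist1 x y ≤ k), ψ y ≤ Y ^ k * ψ x := by
    intro k
    induction k with
    | zero =>
      intro x hx
      have hfilt : F.filter (fun y => dist1 x y ≤ 0) = {x} := by
        ext y
        simp only [Finset.mem_filter, Finset.mem_singleton, Nat.le_zero]
        constructor
        · rintro ⟨-, h0⟩; exact (dist1_eq_zero_iff.mp h0).symm
        · rintro rfl; exact ⟨(hmemF _).mpr hx, dist1_eq_zero_iff.mpr rfl⟩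
      rw [hfilt, Finset.sum_singleton, pow_zero, one_mul]
    | succ k ih =>
      intro x hx
      set A := F.filter (fun y => dist1 x y ≤ k) with hAdef
      set B := F.filter (fun y => dist1 x y = k + 1) with hBdef
      have hsplit : F.filter (fun y => dist1 x y ≤ k + 1) = A ∪ B := by
        ext y
        simp only [hAdef, hBdef, Finset.mem_union, Finset.mem_filter]
        constructor
        · rintro ⟨hyF, hle⟩
          rcases Nat.lt_or_ge (dist1 x y) (k + 1) with h | h
          · exact Or.inl ⟨hyF, Nat.lt_succ_iff.mp h⟩
          · exact Or.inr ⟨hyF, le_antisymm hle h⟩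
        · rintro (⟨hyF, h⟩ | ⟨hyF, h⟩) <;> exact ⟨hyF, by omega⟩
      have hdisj : Disjoint A B := by
        rw [Finset.disjoint_left]
        intro a ha hb
        simp only [hAdef, hBdef, Finset.mem_filter] at ha hb
        omega
      rw [hsplit, Finset.sum_union hdisj]
      -- Claim A: the distance-(k+1) shell is dominated by neighbours of the ball
      have hexc : ∀ z ∈ B, ∃ i, x i ≠ z i := by
        intro z hz
        simp only [hBdef, Finset.mem_filter] at hz
        by_contra h
        push_neg at h
        have h0 : dist1 x z = 0 := dist1_eq_zero_iff.mpr (funext h)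
        omega
      set r : Zd d × Fin d × Bool → Zd d := fun p =>
        if p.2.2 then p.1 + unitVec p.2.1 else p.1 - unitVec p.2.1 with hrdef
      set e : Zd d → Zd d × Fin d × Bool := fun z =>
        if h : ∃ i, x i ≠ z i then
          (stepToward x z h.choose, h.choose, decide (x h.choose < z h.choose))
        else (z, ⟨0, hd⟩, true) with hedef
      set P : Finset (Zd d × Fin d × Bool) := A ×ˢ Finset.univ ×ˢ Finset.univ with hPdef
      have hre : ∀ z ∈ B, r (e z) = z := by
        intro z hz
        have hex := hexc z hz
        simp only [hedef, hrdef, dif_pos hex]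
        by_cases h' : x hex.choose < z hex.choose
        · simp only [h', decide_true, if_true]
          exact stepToward_recover_pos x z _ h'
        · simp only [h', decide_false, if_false]
          exact stepToward_recover_neg x z _ h'
      have hinj : ∀ z₁ ∈ B, ∀ z₂ ∈ B, e z₁ = e z₂ → z₁ = z₂ := by
        intro z₁ h₁ z₂ h₂ heq
        rw [← hre z₁ h₁, heq, hre z₂ h₂]
      have himg : ∀ z ∈ B, e z ∈ P := by
        intro z hz
        have hex := hexc z hz
        simp only [hBdef, Finset.mem_filter] at hz
        have hzΛ : z ∈ Λ := (hmemF z).mp hz.1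
        have hstep : stepToward x z hex.choose ∈ Λ :=
          stepToward_mem_box hx hzΛ _ hex.choose_spec
        have hdist : dist1 x (stepToward x z hex.choose) + 1 = dist1 x z :=
          stepToward_dist x z _ hex.choose_spec
        simp only [hPdef, hedef, dif_pos hex, Finset.mem_product, Finset.mem_univ, and_true]
        refine Finset.mem_filter.mpr ⟨(hmemF _).mpr hstep, ?_⟩
        omega
      have claimA : ∑ z ∈ B, ψ z ≤ ∑ y ∈ A, ∑ i, (ψ (y + unitVec i) + ψ (y - unitVec i)) := by
        have h1 : ∑ z ∈ B, ψ z = ∑ p ∈ B.image e, ψ (r p) := by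
          rw [Finset.sum_image hinj]
          exact Finset.sum_congr rfl fun z hz => (congrArg ψ (hre z hz)).symm
        have h2 : ∑ p ∈ B.image e, ψ (r p) ≤ ∑ p ∈ P, ψ (r p) := by
          apply Finset.sum_le_sum_of_subset_of_nonneg
          · intro p hp
            obtain ⟨z, hz, rfl⟩ := Finset.mem_image.mp hp
            exact himg z hz
          · intro p _ _
            exact hψ0 _
        have h3 : ∑ p ∈ P, ψ (r p) = ∑ y ∈ A, ∑ i, (ψ (y + unitVec i) + ψ (y - unitVec i)) := by
          rw [hPdef, Finset.sum_product]
          refine Finset.sum_congr rfl fun y _ => ?_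
          rw [Finset.sum_product]
          refine Finset.sum_congr rfl fun i _ => ?_
          simp [hrdef, Fintype.sum_bool]
        rw [h1, ← h3]
        exact h2
      calc (∑ y ∈ A, ψ y) + ∑ z ∈ B, ψ z
          ≤ (∑ y ∈ A, ψ y) + ∑ y ∈ A, ∑ i, (ψ (y + unitVec i) + ψ (y - unitVec i)) :=
            add_le_add_right claimA _
        _ = ∑ y ∈ A, (ψ y + ∑ i, (ψ (y + unitVec i) + ψ (y - unitVec i))) :=
            Finset.sum_add_distrib.symm
        _ ≤ ∑ y ∈ A, Y * ψ y := by
            apply Finset.sum_le_sum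
            intro y hy
            simp only [hAdef, Finset.mem_filter] at hy
            exact key y ((hmemF y).mp hy.1)
        _ = Y * ∑ y ∈ A, ψ y := (Finset.mul_sum _ _ _).symm
        _ ≤ Y * (Y ^ k * ψ x) := mul_le_mul_of_nonneg_left (ih x hx) hY0.le
        _ = Y ^ (k + 1) * ψ x := by ring
  -- conclusion
  intro x hx
  have hfull : F.filter (fun y => dist1 x y ≤ d * L) = F := by
    apply Finset.filter_true_of_mem
    intro y hyF
    have hyΛ : y ∈ Λ := (hmemF y).mp hyF
    have hxb : ∀ i, 2 * (x i - x₀ i).natAbs ≤ L := hx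
    have hyb : ∀ i, 2 * (y i - x₀ i).natAbs ≤ L := hyΛ
    calc dist1 x y = ∑ i, (x i - y i).natAbs := rfl
      _ ≤ ∑ _i : Fin d, L := by
          apply Finset.sum_le_sum
          intro i _
          have h1 := hxb i
          have h2 := hyb i
          omega
      _ = d * L := by
          rw [Finset.sum_const, Finset.card_univ, Fintype.card_fin, smul_eq_mul]
  have hmain := main (d * L) x hx
  rw [hfull] at hmain
  have h1 : 1 ≤ Y ^ (d * L) * ψ x := le_trans hsum1 hmain
  have hYpow : (0 : ℝ) < Y ^ (d * L) := pow_pos hY0 _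
  have hfin : (Y ^ (d * L))⁻¹ ≤ ψ x := by
    have h2 := mul_le_mul_of_nonneg_left h1 (le_of_lt (inv_pos.mpr hYpow))
    rwa [mul_one, ← mul_assoc, inv_mul_cancel₀ (ne_of_gt hYpow), one_mul] at h2
  calc Y ^ (-((d * L : ℕ) : ℤ)) = (Y ^ (d * L))⁻¹ := by
        rw [zpow_neg, zpow_natCast]
    _ ≤ ψ x := hfin
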